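/- arXiv:2605.14470 — 2 statements merged into one kernel-verified Lean document; each statement's English description precedes it below -/
import Mathlib

section
/- Let U be a category with pullbacks and j_! : U → X a left adjoint functor. Then j_! is left Cartesian if and only if for every object A ∈ U, the induced functor on slices U_{/A} → X_{/j_!A} is a reflective localization (i.e., its right adjoint is fully faithful). -/
open CategoryTheory CategoryTheory.Limits

universe v₁ v₂ u₁ u₂

/-- An adjunction `j₁ ⊣ js` is locally Cartesian if for every `f : A ⟶ B` and
`g : Z ⟶ js.obj B`, the square comparing `j₁ (js A ×_{js B} Z)` with the pullback of `f`
along `j₁ g ≫ ε_B` is Cartesian. -/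
def IsLocallyCartesianAdj {U : Type u₁} [Category.{v₁} U] {X : Type u₂} [Category.{v₂} X]
    {j₁ : U ⥤ X} {js : X ⥤ U} (adj : j₁ ⊣ js) [HasPullbacks U] : Prop :=
  ∀ {A B : X} (f : A ⟶ B) {Z : U} (g : Z ⟶ js.obj B),
    IsPullback (j₁.map (pullback.fst (js.map f) g) ≫ adj.counit.app A)
      (j₁.map (pullback.snd (js.map f) g)) f (j₁.map g ≫ adj.counit.app B)

namespace IsLocallyCartesianAuxNS

set_option linter.unusedSectionVars false

variable {U : Type u₁} [Category.{v₁} U] {X : Type u₂} [Category.{v₂} X] [HasPullbacks U]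
  (j₁ : U ⥤ X) (js : X ⥤ U) (adj : j₁ ⊣ js)

theorem trans_comp {S : U} {W W' : X} (m : S ⟶ js.obj W) (t : W ⟶ W') :
    (j₁.map m ≫ adj.counit.app W) ≫ t = j₁.map (m ≫ js.map t) ≫ adj.counit.app W' := by
  rw [Functor.map_comp, Category.assoc, Category.assoc]
  erw [adj.counit_naturality]

theorem untrans {S W : U} (n : S ⟶ W) :
    j₁.map (n ≫ adj.unit.app W) ≫ adj.counit.app (j₁.obj W) = j₁.map n := by
  rw [Functor.map_comp, Category.assoc, adj.left_triangle_components, Category.comp_id]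

theorem unit_comp {Z : U} {B : X} (g : Z ⟶ js.obj B) :
    adj.unit.app Z ≫ js.map (j₁.map g ≫ adj.counit.app B) = g := by
  rw [Functor.map_comp, ← Category.assoc]
  erw [adj.unit_naturality]
  rw [Category.assoc,
    adj.right_triangle_components, Category.comp_id]

@[simp]
theorem lift_fst' (A : U) {W P : U} (f : W ⟶ js.obj (j₁.obj A)) (h : P ⟶ W) (k : P ⟶ A)
    (w : h ≫ f = k ≫ adj.unit.app A) :
    pullback.lift (Y := A) h k w ≫ pullback.fst (Y := A) f (adj.unit.app A) = h :=
  pullback.lift_fst _ _ _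

@[simp]
theorem lift_snd' (A : U) {W P : U} (f : W ⟶ js.obj (j₁.obj A)) (h : P ⟶ W) (k : P ⟶ A)
    (w : h ≫ f = k ≫ adj.unit.app A) :
    pullback.lift (Y := A) h k w ≫ pullback.snd (Y := A) f (adj.unit.app A) = k :=
  pullback.lift_snd _ _ _

@[simp]
theorem lift_fst'_assoc (A : U) {W P Q : U} (f : W ⟶ js.obj (j₁.obj A)) (h : P ⟶ W) (k : P ⟶ A)
    (w : h ≫ f = k ≫ adj.unit.app A) (r : W ⟶ Q) :
    pullback.lift (Y := A) h k w ≫ pullback.fst (Y := A) f (adj.unit.app A) ≫ r = h ≫ r :=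
  pullback.lift_fst_assoc _ _ _ _

@[simp]
theorem lift_snd'_assoc (A : U) {W P Q : U} (f : W ⟶ js.obj (j₁.obj A)) (h : P ⟶ W) (k : P ⟶ A)
    (w : h ≫ f = k ≫ adj.unit.app A) (r : A ⟶ Q) :
    pullback.lift (Y := A) h k w ≫ pullback.snd (Y := A) f (adj.unit.app A) ≫ r = k ≫ r :=
  pullback.lift_snd_assoc _ _ _ _

theorem left_inv_aux {S : U} {W : X} (f : j₁.obj S ⟶ W) :
    j₁.map (adj.unit.app S ≫ js.map f) ≫ adj.counit.app W = f := by
  simp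

theorem nat_right_aux_fst {A S : U} {W W' : X} (xh : S ⟶ A) (u : j₁.obj S ⟶ W) (k : W ⟶ W')
    (yh : W ⟶ j₁.obj A) (yh' : W' ⟶ j₁.obj A)
    (w1 : (adj.unit.app S ≫ js.map (u ≫ k)) ≫ js.map yh' = xh ≫ adj.unit.app A)
    (w2 : (adj.unit.app S ≫ js.map u) ≫ js.map yh = xh ≫ adj.unit.app A)
    (w3 : (pullback.fst (js.map yh) (adj.unit.app A) ≫ js.map k) ≫ js.map yh'
      = pullback.snd (js.map yh) (adj.unit.app A) ≫ adj.unit.app A) :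
    pullback.lift (adj.unit.app S ≫ js.map (u ≫ k)) xh w1 ≫ pullback.fst (js.map yh') (adj.unit.app A)
      = (pullback.lift (adj.unit.app S ≫ js.map u) xh w2 ≫
        pullback.lift (pullback.fst (js.map yh) (adj.unit.app A) ≫ js.map k)
          (pullback.snd (js.map yh) (adj.unit.app A)) w3) ≫
        pullback.fst (js.map yh') (adj.unit.app A) := by
  simp

theorem nat_right_aux_snd {A S : U} {W W' : X} (xh : S ⟶ A) (u : j₁.obj S ⟶ W) (k : W ⟶ W')
    (yh : W ⟶ j₁.obj A) (yh' : W' ⟶ j₁.obj A)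
    (w1 : (adj.unit.app S ≫ js.map (u ≫ k)) ≫ js.map yh' = xh ≫ adj.unit.app A)
    (w2 : (adj.unit.app S ≫ js.map u) ≫ js.map yh = xh ≫ adj.unit.app A)
    (w3 : (pullback.fst (js.map yh) (adj.unit.app A) ≫ js.map k) ≫ js.map yh'
      = pullback.snd (js.map yh) (adj.unit.app A) ≫ adj.unit.app A) :
    pullback.lift (adj.unit.app S ≫ js.map (u ≫ k)) xh w1 ≫ pullback.snd (js.map yh') (adj.unit.app A)
      = (pullback.lift (adj.unit.app S ≫ js.map u) xh w2 ≫
        pullback.lift (pullback.fst (js.map yh) (adj.unit.app A) ≫ js.map k)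
          (pullback.snd (js.map yh) (adj.unit.app A)) w3) ≫
        pullback.snd (js.map yh') (adj.unit.app A) := by
  simp

theorem nat_left_aux {P Q S : U} {W : X} (a : P ⟶ Q) (b : Q ⟶ S) (c : S ⟶ js.obj W) :
    j₁.map ((a ≫ b) ≫ c) ≫ adj.counit.app W = j₁.map a ≫ j₁.map (b ≫ c) ≫ adj.counit.app W := by
  simp

/-- The candidate right adjoint to `Over.post j₁ : Over A ⥤ Over (j₁ A)`. -/
noncomputable def sliceR (A : U) : Over (j₁.obj A) ⥤ Over A where
  obj y := Over.mk (pullback.snd (js.map y.hom) (adj.unit.app A))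
  map {y z} k := Over.homMk
    (pullback.lift (pullback.fst _ _ ≫ js.map k.left) (pullback.snd _ _)
      (by rw [Category.assoc, ← js.map_comp, Over.w k, pullback.condition]))
    (by simp)
  map_id y := by
    ext
    dsimp
    apply pullback.hom_ext <;> simp
  map_comp {x y z} k l := by
    ext
    dsimp
    apply pullback.hom_ext <;> simp

noncomputable def sliceAdj (A : U) :
    (Over.post (X := A) j₁ : Over A ⥤ Over (j₁.obj A)) ⊣ sliceR j₁ js adj A :=
  Adjunction.mkOfHomEquiv
  { homEquiv := fun x y =>
    { toFun := fun u => Over.homMk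
        (pullback.lift (adj.unit.app x.left ≫ js.map u.left) x.hom
          (by
            rw [Category.assoc]
            erw [← js.map_comp, Over.w u]
            exact (adj.unit.naturality x.hom).symm))
        (by simp [sliceR])
      invFun := fun v => Over.homMk
        (j₁.map (v.left ≫ pullback.fst _ _) ≫ adj.counit.app y.left)
        (by
          have hv : v.left ≫ pullback.snd (js.map y.hom) (adj.unit.app A) = x.hom := Over.w v
          erw [Category.assoc, ← adj.counit_naturality, ← Functor.map_comp_assoc,
            Category.assoc, pullback.condition, ← Category.assoc, hv]
          exact untrans j₁ js adj x.hom)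
      left_inv := fun u => by
        ext
        dsimp
        exact (congrArg (fun t => j₁.map t ≫ adj.counit.app y.left) (pullback.lift_fst _ _ _)).trans
          (left_inv_aux j₁ js adj u.left)
      right_inv := fun v => by
        ext
        dsimp
        apply pullback.hom_ext
        · exact (pullback.lift_fst _ _ _).trans (unit_comp j₁ js adj _)
        · exact (pullback.lift_snd _ _ _).trans (Over.w v).symm }
    homEquiv_naturality_left_symm := fun {x' x y} fmap gmap => by
      ext
      dsimp
      exact nat_left_aux j₁ js adj _ _ _
    homEquiv_naturality_right := fun {x y y'} umap kmap => by
      ext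
      dsimp [sliceR]
      apply pullback.hom_ext
      · exact nat_right_aux_fst j₁ js adj x.hom umap.left kmap.left y.hom y'.hom _ _ _
      · exact nat_right_aux_snd j₁ js adj x.hom umap.left kmap.left y.hom y'.hom _ _ _ }

theorem sliceAdj_counit_app_left (A : U) (y : Over (j₁.obj A)) :
    ((sliceAdj j₁ js adj A).counit.app y).left =
      j₁.map (pullback.fst (js.map y.hom) (adj.unit.app A)) ≫ adj.counit.app y.left := by
  simp [sliceAdj, Adjunction.mkOfHomEquiv]
  erw [Category.id_comp]
  rfl

theorem cv_comp {Z : U} {T : X} (v : T ⟶ j₁.obj Z) :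
    (j₁.map (pullback.fst (js.map v) (adj.unit.app Z)) ≫ adj.counit.app T) ≫ v
      = j₁.map (pullback.snd (js.map v) (adj.unit.app Z)) := by
  rw [Category.assoc]
  erw [← adj.counit_naturality]
  rw [← Functor.map_comp_assoc, pullback.condition]
  exact untrans j₁ js adj _

noncomputable def kmap {A B : X} (f : A ⟶ B) {Z : U} (g : Z ⟶ js.obj B) {T : X}
    (u : T ⟶ A) (v : T ⟶ j₁.obj Z) (hc : u ≫ f = v ≫ (j₁.map g ≫ adj.counit.app B)) :
    pullback (js.map v) (adj.unit.app Z) ⟶ pullback (js.map f) g :=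
  pullback.lift (pullback.fst _ _ ≫ js.map u) (pullback.snd _ _) (by
    rw [Category.assoc, ← js.map_comp, hc, js.map_comp, ← Category.assoc, pullback.condition,
      Category.assoc, unit_comp j₁ js adj g])

theorem key_transpose {W : U} {T C : X} (mw : T ⟶ j₁.obj W) (t : W ⟶ js.obj C) :
    pullback.fst (js.map mw) (adj.unit.app W) ≫ js.map (mw ≫ (j₁.map t ≫ adj.counit.app C))
      = pullback.snd (js.map mw) (adj.unit.app W) ≫ t := by
  rw [js.map_comp, ← Category.assoc, pullback.condition, Category.assoc, unit_comp j₁ js adj t]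

theorem isPullback_of_counitIso (H : ∀ (A : U) {T : X} (v : T ⟶ j₁.obj A),
    IsIso (j₁.map (pullback.fst (js.map v) (adj.unit.app A)) ≫ adj.counit.app T)) :
    IsLocallyCartesianAdj adj := by
  intro A B f Z g
  have comm : (j₁.map (pullback.fst (js.map f) g) ≫ adj.counit.app A) ≫ f
      = j₁.map (pullback.snd (js.map f) g) ≫ (j₁.map g ≫ adj.counit.app B) := by
    rw [Category.assoc]
    erw [← adj.counit_naturality]
    rw [← Functor.map_comp_assoc, pullback.condition,
      Functor.map_comp_assoc]
  refine IsPullback.of_isLimit (PullbackCone.IsLimit.mk comm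
    (fun s => letI := H Z s.snd;
      inv (j₁.map (pullback.fst (js.map s.snd) (adj.unit.app Z)) ≫ adj.counit.app s.pt) ≫
        j₁.map (kmap j₁ js adj f g s.fst s.snd s.condition)) ?_ ?_ ?_)
  · intro s
    letI := H Z s.snd
    have h1 : j₁.map (kmap j₁ js adj f g s.fst s.snd s.condition) ≫
        (j₁.map (pullback.fst (js.map f) g) ≫ adj.counit.app A)
        = (j₁.map (pullback.fst (js.map s.snd) (adj.unit.app Z)) ≫ adj.counit.app s.pt) ≫
          s.fst := by
      rw [← Functor.map_comp_assoc, kmap, pullback.lift_fst, Functor.map_comp, Category.assoc]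
      erw [adj.counit_naturality]
      rw [Category.assoc]
    rw [Category.assoc, h1, IsIso.inv_hom_id_assoc]
  · intro s
    letI := H Z s.snd
    rw [Category.assoc, ← Functor.map_comp, kmap, pullback.lift_snd, ← cv_comp j₁ js adj s.snd,
      ← Category.assoc, IsIso.inv_hom_id, Category.id_comp]
  · intro s m hm1 hm2
    letI := H Z s.snd
    letI := H (pullback (js.map f) g) m
    -- abbreviations (as plain haves)
    have hρcond : pullback.fst (js.map m) (adj.unit.app (pullback (js.map f) g)) ≫ js.map s.snd
        = (pullback.snd (js.map m) (adj.unit.app (pullback (js.map f) g)) ≫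
            pullback.snd (js.map f) g) ≫ adj.unit.app Z := by
      rw [← hm2, js.map_comp, ← Category.assoc, pullback.condition, Category.assoc]
      erw [adj.unit_naturality]
      rw [← Category.assoc]
    have hefst : pullback.snd (js.map m) (adj.unit.app (pullback (js.map f) g)) ≫
          pullback.fst (js.map f) g
        = pullback.fst (js.map m) (adj.unit.app (pullback (js.map f) g)) ≫ js.map s.fst := by
      rw [← hm1]
      exact (key_transpose j₁ js adj m (pullback.fst (js.map f) g)).symm
    have h_e : pullback.snd (js.map m) (adj.unit.app (pullback (js.map f) g))
        = pullback.lift (pullback.fst _ _)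
            (pullback.snd _ _ ≫ pullback.snd (js.map f) g) hρcond ≫
          kmap j₁ js adj f g s.fst s.snd s.condition := by
      apply pullback.hom_ext
      · rw [kmap, Category.assoc, pullback.lift_fst, ← Category.assoc, pullback.lift_fst, hefst]
      · rw [kmap, Category.assoc, pullback.lift_snd, pullback.lift_snd]
    have h_cwm : (j₁.map (pullback.fst (js.map m)
          (adj.unit.app (pullback (js.map f) g))) ≫ adj.counit.app s.pt) ≫ m
        = j₁.map (pullback.snd (js.map m) (adj.unit.app (pullback (js.map f) g))) :=
      cv_comp j₁ js adj m
    have h_cw : j₁.map (pullback.fst (js.map m) (adj.unit.app (pullback (js.map f) g))) ≫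
          adj.counit.app s.pt
        = j₁.map (pullback.lift (pullback.fst _ _)
              (pullback.snd _ _ ≫ pullback.snd (js.map f) g) hρcond) ≫
            (j₁.map (pullback.fst (js.map s.snd) (adj.unit.app Z)) ≫ adj.counit.app s.pt) := by
      rw [← Functor.map_comp_assoc, pullback.lift_fst]
    rw [← cancel_epi (j₁.map (pullback.fst (js.map m)
        (adj.unit.app (pullback (js.map f) g))) ≫ adj.counit.app s.pt), h_cwm, h_e,
      Functor.map_comp, h_cw, Category.assoc]
    beta_reduce
    rw [IsIso.hom_inv_id_assoc]

theorem counitIso_of_lc (hlc : IsLocallyCartesianAdj adj) {A : U} {T : X} (v : T ⟶ j₁.obj A) :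
    IsIso (j₁.map (pullback.fst (js.map v) (adj.unit.app A)) ≫ adj.counit.app T) := by
  have h := hlc v (adj.unit.app A)
  erw [adj.left_triangle_components] at h
  have h2 : IsPullback (𝟙 T) v v (𝟙 (j₁.obj A)) := IsPullback.of_id_fst
  have he := h.isoIsPullback_hom_fst _ _ h2
  rw [Category.comp_id] at he
  rw [← he]
  infer_instance

theorem counitIso_of_reflective (A : U) (R : Over (j₁.obj A) ⥤ Over A)
    (adj' : (Over.post (X := A) j₁ : Over A ⥤ Over (j₁.obj A)) ⊣ R) [R.Full] [R.Faithful]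
    {T : X} (v : T ⟶ j₁.obj A) :
    IsIso (j₁.map (pullback.fst (js.map v) (adj.unit.app A)) ≫ adj.counit.app T) := by
  set y : Over (j₁.obj A) := Over.mk v with hy
  have key := Adjunction.rightAdjointUniq_hom_counit (sliceAdj j₁ js adj A) adj'
  have happ : (Over.post (X := A) j₁).map
        ((Adjunction.rightAdjointUniq (sliceAdj j₁ js adj A) adj').hom.app y) ≫
        adj'.counit.app y = (sliceAdj j₁ js adj A).counit.app y :=
    congr_arg (fun t => t.app y) key
  haveI : IsIso ((sliceAdj j₁ js adj A).counit.app y) := by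
    rw [← happ]
    infer_instance
  haveI : IsIso (((sliceAdj j₁ js adj A).counit.app y).left) :=
    (inferInstance : IsIso ((Over.forget _).map ((sliceAdj j₁ js adj A).counit.app y)))
  have hc := sliceAdj_counit_app_left j₁ js adj A y
  rw [hc] at this
  exact this

theorem isLocallyCartesian_iff_slices_reflective' :
    IsLocallyCartesianAdj adj ↔
      ∀ A : U, ∃ R : Over (j₁.obj A) ⥤ Over A,
        Nonempty ((Over.post j₁ : Over A ⥤ Over (j₁.obj A)) ⊣ R) ∧ R.Full ∧ R.Faithful := by
  constructor
  · intro hlc A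
    haveI : ∀ y : Over (j₁.obj A), IsIso ((sliceAdj j₁ js adj A).counit.app y) := fun y => by
      haveI h2 : IsIso (((sliceAdj j₁ js adj A).counit.app y).left) := by
        rw [sliceAdj_counit_app_left]
        exact counitIso_of_lc j₁ js adj hlc y.hom
      haveI : IsIso ((Over.forget _).map ((sliceAdj j₁ js adj A).counit.app y)) := h2
      exact isIso_of_reflects_iso _ (Over.forget _)
    haveI : IsIso (sliceAdj j₁ js adj A).counit := NatIso.isIso_of_isIso_app _
    exact ⟨sliceR j₁ js adj A, ⟨sliceAdj j₁ js adj A⟩,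
      ((sliceAdj j₁ js adj A).fullyFaithfulROfIsIsoCounit).full,
      ((sliceAdj j₁ js adj A).fullyFaithfulROfIsIsoCounit).faithful⟩
  · intro h
    apply isPullback_of_counitIso j₁ js adj
    intro A T v
    obtain ⟨R, ⟨adj'⟩, hfull, hfaith⟩ := h A
    haveI := hfull
    haveI := hfaith
    exact counitIso_of_reflective j₁ js adj A R adj' v

end IsLocallyCartesianAuxNS

/-- A left adjoint `j₁ : U ⥤ X`, with `U` having pullbacks, is left Cartesian iff for every
`A : U` the induced functor on slices `U_{/A} → X_{/j₁ A}` is a reflective localization, i.e.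
admits a fully faithful right adjoint. -/
theorem isLocallyCartesian_iff_slices_reflective {U : Type u₁} [Category.{v₁} U]
    {X : Type u₂} [Category.{v₂} X] [HasPullbacks U]
    (j₁ : U ⥤ X) (js : X ⥤ U) (adj : j₁ ⊣ js) :
    IsLocallyCartesianAdj adj ↔
      ∀ A : U, ∃ R : Over (j₁.obj A) ⥤ Over A,
        Nonempty ((Over.post j₁ : Over A ⥤ Over (j₁.obj A)) ⊣ R) ∧ R.Full ∧ R.Faithful :=
  IsLocallyCartesianAuxNS.isLocallyCartesian_iff_slices_reflective' j₁ js adj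
end

section
/- Let U be a category with pullbacks and j_! : U → X a left adjoint functor. The following are equivalent: (1) j_! is conservative, preserves pullbacks, and the counit of the adjunction is Cartesian; (2) j_! is conservative and left Cartesian; (3) for every A ∈ U, the induced functor U_{/A} → X_{/j_!A} is an equivalence of categories. Moreover, if additionally U has a terminal object, these conditions hold if and only if j_! is equivalent to a slice projection X_{/B} → X for some object B ∈ X. -/
open CategoryTheory CategoryTheory.Limits

universe v₁ v₂ u₁ u₂

namespace LCAux

/-- If a square with identity bottom is a pullback, its top map is an isomorphism. -/
lemma isIso_fst_of_id {C : Type*} [Category C] {P A B : C} {a : P ⟶ A} {b : P ⟶ B} {f : A ⟶ B}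
    (h : IsPullback a b f (𝟙 B)) : IsIso a := by
  have hw : a ≫ f = b := by simpa using h.w
  refine ⟨h.lift (𝟙 A) f (by simp), ?_, h.lift_fst _ _ _⟩
  apply h.hom_ext
  · simp [h.lift_fst]
  · simp [h.lift_snd, hw]

variable {U : Type u₁} [Category.{v₁} U] {X : Type u₂} [Category.{v₂} X] [HasPullbacks U]
variable {j₁ : U ⥤ X} {js : X ⥤ U} (adj : j₁ ⊣ js)

section LocCart

/-- The key square : pulling back along the unit gives a pullback over the identity. -/
lemma key (hlc : IsLocallyCartesianAdj adj) {A : U} {Y : X} (hY : Y ⟶ j₁.obj A) :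
    IsPullback (j₁.map (pullback.fst (js.map hY) (adj.unit.app A)) ≫ adj.counit.app Y)
      (j₁.map (pullback.snd (js.map hY) (adj.unit.app A))) hY (𝟙 (j₁.obj A)) := by
  have := hlc hY (adj.unit.app A)
  rwa [adj.left_triangle_components A] at this

lemma unit_w {A : U} (W : Over A) :
    adj.unit.app W.left ≫ js.map (j₁.map W.hom) = W.hom ≫ adj.unit.app A := by
  simpa using (adj.unit.naturality W.hom).symm

/-- The canonical comparison from `W` into the pullback of `js (j₁ W.hom)` along the unit. -/
noncomputable def sigma {A : U} (W : Over A) :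
    W.left ⟶ pullback (js.map (j₁.map W.hom)) (adj.unit.app A) :=
  pullback.lift (adj.unit.app W.left) W.hom (unit_w adj W)

lemma jsigma_comp {A : U} (W : Over A) :
    j₁.map (sigma adj W) ≫
      (j₁.map (pullback.fst (js.map (j₁.map W.hom)) (adj.unit.app A)) ≫
        adj.counit.app (j₁.obj W.left)) = 𝟙 (j₁.obj W.left) := by
  rw [← Category.assoc, ← j₁.map_comp, sigma, pullback.lift_fst]
  simpa using adj.left_triangle_components W.left

lemma key' (hlc : IsLocallyCartesianAdj adj) {A : U} (W : Over A) :
    IsPullback (j₁.map (pullback.fst (js.map (j₁.map W.hom)) (adj.unit.app A)) ≫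
        adj.counit.app (j₁.obj W.left))
      (j₁.map (pullback.snd (js.map (j₁.map W.hom)) (adj.unit.app A)))
      (j₁.map W.hom) (𝟙 (j₁.obj A)) :=
  key adj hlc (j₁.map W.hom)

lemma isIso_jsigma (hlc : IsLocallyCartesianAdj adj) {A : U} (W : Over A) :
    IsIso (j₁.map (sigma adj W)) := by
  haveI := isIso_fst_of_id (key' adj hlc W)
  exact IsIso.of_isIso_fac_right (jsigma_comp adj W)

lemma isIso_sigma (hlc : IsLocallyCartesianAdj adj) (hR : j₁.ReflectsIsomorphisms) {A : U} (W : Over A) :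
    IsIso (sigma adj W) := by
  haveI := hR
  haveI := isIso_jsigma adj hlc W
  exact isIso_of_reflects_iso (sigma adj W) j₁

/-- Conservative + locally Cartesian implies each slice functor is an equivalence. -/
lemma post_isEquivalence (hlc : IsLocallyCartesianAdj adj) (hR : j₁.ReflectsIsomorphisms) (A : U) :
    (Over.post j₁ (X := A)).IsEquivalence := by
  haveI full : (Over.post j₁ (X := A)).Full := by
    constructor
    intro V W k
    change Over.mk (j₁.map V.hom) ⟶ Over.mk (j₁.map W.hom) at k
    haveI := isIso_sigma adj hlc hR W
    have hk : k.left ≫ j₁.map W.hom = j₁.map V.hom := Over.w k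
    have w1 : (adj.unit.app V.left ≫ js.map k.left) ≫ js.map (j₁.map W.hom)
        = V.hom ≫ adj.unit.app A := by
      rw [Category.assoc, ← js.map_comp, hk]
      simpa using (adj.unit.naturality V.hom).symm
    set l := pullback.lift (adj.unit.app V.left ≫ js.map k.left) V.hom w1 with hl
    set m := l ≫ inv (sigma adj W) with hm
    have hmW : m ≫ W.hom = V.hom := by
      have h2 : inv (sigma adj W) ≫ W.hom = pullback.snd _ _ := by
        rw [IsIso.inv_comp_eq, sigma, pullback.lift_snd]
      rw [hm, Category.assoc, h2, hl, pullback.lift_snd]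
    have hjm : j₁.map m = k.left := by
      haveI := isIso_jsigma adj hlc W
      have hinv : inv (j₁.map (sigma adj W)) =
          j₁.map (pullback.fst (js.map (j₁.map W.hom)) (adj.unit.app A)) ≫
            adj.counit.app (j₁.obj W.left) := by
        rw [← Category.comp_id (inv (j₁.map (sigma adj W))), ← jsigma_comp adj W,
          IsIso.inv_hom_id_assoc]
      have hnat : j₁.map (js.map k.left) ≫ adj.counit.app (j₁.obj W.left)
          = adj.counit.app (j₁.obj V.left) ≫ k.left := by
        simpa using adj.counit.naturality k.left
      rw [hm, j₁.map_comp, j₁.map_inv, hinv, ← Category.assoc, ← j₁.map_comp, hl,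
        pullback.lift_fst, j₁.map_comp, Category.assoc, hnat]
      have tri : j₁.map (adj.unit.app V.left) ≫ adj.counit.app (j₁.obj V.left) = 𝟙 _ := by
        simpa using adj.left_triangle_components V.left
      rw [← Category.assoc, tri, Category.id_comp]
    exact ⟨Over.homMk m hmW, by ext; exact hjm⟩
  haveI faithful : (Over.post j₁ (X := A)).Faithful := by
    constructor
    intro V W φ ψ h
    haveI := isIso_sigma adj hlc hR W
    have hleft : j₁.map φ.left = j₁.map ψ.left := by
      exact congrArg CommaMorphism.left h
    have : φ.left ≫ sigma adj W = ψ.left ≫ sigma adj W := by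
      apply pullback.hom_ext
      · rw [Category.assoc, Category.assoc, sigma, pullback.lift_fst]
        have n1 : φ.left ≫ adj.unit.app W.left
            = adj.unit.app V.left ≫ js.map (j₁.map φ.left) := by
          simpa using adj.unit.naturality φ.left
        have n2 : ψ.left ≫ adj.unit.app W.left
            = adj.unit.app V.left ≫ js.map (j₁.map ψ.left) := by
          simpa using adj.unit.naturality ψ.left
        rw [n1, n2, hleft]
      · rw [Category.assoc, Category.assoc, sigma, pullback.lift_snd, Over.w, Over.w]
    have := (cancel_mono (sigma adj W)).mp this
    ext
    exact this
  haveI essSurj : (Over.post j₁ (X := A)).EssSurj := by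
    constructor
    intro Y
    have kp := key adj hlc Y.hom
    haveI := isIso_fst_of_id kp
    have hw : (j₁.map (pullback.fst (js.map Y.hom) (adj.unit.app A)) ≫ adj.counit.app _)
        ≫ Y.hom = j₁.map (pullback.snd (js.map Y.hom) (adj.unit.app A)) := by
      simpa using kp.w
    refine ⟨Over.mk (pullback.snd (js.map Y.hom) (adj.unit.app A)), ⟨Over.isoMk
      (asIso (j₁.map (pullback.fst (js.map Y.hom) (adj.unit.app A)) ≫ adj.counit.app _) : j₁.obj _ ≅ _)
      (by exact hw)⟩⟩
  exact {}

end LocCart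

section FromSlices

variable (hE : ∀ A : U, (Over.post j₁ (X := A)).IsEquivalence)
include hE

/-- Slice equivalences imply conservativity. -/
lemma reflectsIso_of_slices : j₁.ReflectsIsomorphisms := by
  constructor
  intro A B f hf
  haveI := hE B
  let φ : Over.mk f ⟶ Over.mk (𝟙 B) := Over.homMk f (by simp)
  haveI : IsIso ((Over.forget _).map ((Over.post j₁ (X := B)).map φ)) := by
    exact hf
  haveI : IsIso ((Over.post j₁ (X := B)).map φ) :=
    isIso_of_reflects_iso _ (Over.forget _)
  haveI : IsIso φ := isIso_of_reflects_iso φ (Over.post j₁ (X := B))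
  have : IsIso ((Over.forget B).map φ) := inferInstance
  simpa [φ] using this

/-- Slice equivalences imply that `j₁` preserves pullback squares. -/
lemma map_isPullback_of_slices {P A₀ B₀ C₀ : U} {fst : P ⟶ A₀} {snd : P ⟶ B₀}
    {f₀ : A₀ ⟶ C₀} {g₀ : B₀ ⟶ C₀} (hpb : IsPullback fst snd f₀ g₀) :
    IsPullback (j₁.map fst) (j₁.map snd) (j₁.map f₀) (j₁.map g₀) := by
  haveI := hE C₀
  set F := Over.post j₁ (X := C₀) with hF
  have comm : j₁.map fst ≫ j₁.map f₀ = j₁.map snd ≫ j₁.map g₀ := by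
    rw [← j₁.map_comp, ← j₁.map_comp, hpb.w]
  have H : ∀ {T : X} (p : T ⟶ j₁.obj A₀) (q : T ⟶ j₁.obj B₀),
      p ≫ j₁.map f₀ = q ≫ j₁.map g₀ →
      ∃! mm : T ⟶ j₁.obj P, mm ≫ j₁.map fst = p ∧ mm ≫ j₁.map snd = q := by
    intro T p q hcomm
    let Yo : Over (j₁.obj C₀) := Over.mk (p ≫ j₁.map f₀)
    let O₀ : Over C₀ := F.objPreimage Yo
    let ι : F.obj O₀ ≅ Yo := F.objObjPreimageIso Yo
    let ih : j₁.obj O₀.left ⟶ T := ι.hom.left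
    let iv : T ⟶ j₁.obj O₀.left := ι.inv.left
    have hι : ih ≫ p ≫ j₁.map f₀ = j₁.map O₀.hom := by
      exact Over.w ι.hom
    have hιq : ih ≫ q ≫ j₁.map g₀ = j₁.map O₀.hom := by
      rw [← hcomm]; exact hι
    have hιinv : iv ≫ ih = 𝟙 T := by
      show ι.inv.left ≫ ι.hom.left = 𝟙 T
      rw [← Over.comp_left, ι.inv_hom_id]
      rfl
    let χp : F.obj O₀ ⟶ F.obj (Over.mk f₀) :=
      Over.homMk (ih ≫ p) (by exact (Category.assoc _ _ _).trans hι)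
    let χq : F.obj O₀ ⟶ F.obj (Over.mk g₀) :=
      Over.homMk (ih ≫ q) (by exact (Category.assoc _ _ _).trans hιq)
    have hp : (F.preimage χp).left ≫ f₀ = O₀.hom := by
      simpa using Over.w (F.preimage χp)
    have hq : (F.preimage χq).left ≫ g₀ = O₀.hom := by
      simpa using Over.w (F.preimage χq)
    have hjp : j₁.map (F.preimage χp).left = ih ≫ p := by
      have := congrArg CommaMorphism.left (F.map_preimage χp)
      exact this
    have hjq : j₁.map (F.preimage χq).left = ih ≫ q := by
      have := congrArg CommaMorphism.left (F.map_preimage χq)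
      exact this
    refine ⟨iv ≫ j₁.map (hpb.lift (F.preimage χp).left (F.preimage χq).left
      (by rw [hp, hq])), ⟨?_, ?_⟩, ?_⟩
    · rw [Category.assoc, ← j₁.map_comp, hpb.lift_fst, hjp, ← Category.assoc, hιinv,
        Category.id_comp]
    · rw [Category.assoc, ← j₁.map_comp, hpb.lift_snd, hjq, ← Category.assoc, hιinv,
        Category.id_comp]
    · rintro m ⟨hm1, hm2⟩
      have wχ : (ih ≫ m) ≫ (F.obj (Over.mk (fst ≫ f₀))).hom = (F.obj O₀).hom := by
        show (ih ≫ m) ≫ j₁.map (fst ≫ f₀) = j₁.map O₀.hom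
        rw [j₁.map_comp, Category.assoc, ← Category.assoc m, hm1]
        exact hι
      let χ : F.obj O₀ ⟶ F.obj (Over.mk (fst ≫ f₀)) := Over.homMk (ih ≫ m) wχ
      have hjχ : j₁.map (F.preimage χ).left = ih ≫ m := by
        have := congrArg CommaMorphism.left (F.map_preimage χ)
        exact this
      have wfst : ((F.preimage χ).left ≫ fst) ≫ f₀ = O₀.hom := by
        rw [Category.assoc]; simpa using Over.w (F.preimage χ)
      have wsnd : ((F.preimage χ).left ≫ snd) ≫ g₀ = O₀.hom := by
        rw [Category.assoc, ← hpb.w, ← Category.assoc]; exact wfst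
      have e1 : (F.preimage χ).left ≫ fst = (F.preimage χp).left := by
        have h' : F.map (Over.homMk ((F.preimage χ).left ≫ fst) wfst : O₀ ⟶ Over.mk f₀)
            = F.map (F.preimage χp) := by
          rw [F.map_preimage]
          ext
          show j₁.map ((F.preimage χ).left ≫ fst) = χp.left
          rw [j₁.map_comp, hjχ, Category.assoc, hm1]
          rfl
        exact congrArg CommaMorphism.left (F.map_injective h')
      have e2 : (F.preimage χ).left ≫ snd = (F.preimage χq).left := by
        have h' : F.map (Over.homMk ((F.preimage χ).left ≫ snd) wsnd : O₀ ⟶ Over.mk g₀)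
            = F.map (F.preimage χq) := by
          rw [F.map_preimage]
          ext
          show j₁.map ((F.preimage χ).left ≫ snd) = χq.left
          rw [j₁.map_comp, hjχ, Category.assoc, hm2]
          rfl
        exact congrArg CommaMorphism.left (F.map_injective h')
      have hk : (F.preimage χ).left = hpb.lift (F.preimage χp).left (F.preimage χq).left
          (by rw [hp, hq]) := by
        apply hpb.hom_ext
        · rw [hpb.lift_fst, e1]
        · rw [hpb.lift_snd, e2]
      calc m = (iv ≫ ih) ≫ m := by rw [hιinv, Category.id_comp]
        _ = iv ≫ j₁.map (F.preimage χ).left := by rw [Category.assoc, hjχ]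
        _ = _ := by rw [hk]
  refine IsPullback.of_isLimit' ⟨comm⟩ ?_
  exact PullbackCone.IsLimit.mk comm
    (fun s => (H s.fst s.snd s.condition).choose)
    (fun s => (H s.fst s.snd s.condition).choose_spec.1.1)
    (fun s => (H s.fst s.snd s.condition).choose_spec.1.2)
    (fun s m h1 h2 => (H s.fst s.snd s.condition).choose_spec.2 m ⟨h1, h2⟩)

/-- Slice equivalences imply the counit is Cartesian. -/
lemma counit_cartesian_of_slices {A B : X} (f : A ⟶ B) :
    IsPullback (adj.counit.app A) (j₁.map (js.map f)) f (adj.counit.app B) := by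
  haveI := hE (js.obj B)
  set F := Over.post j₁ (X := js.obj B) with hF
  have comm : adj.counit.app A ≫ f = j₁.map (js.map f) ≫ adj.counit.app B := by
    simpa using (adj.counit.naturality f).symm
  have H : ∀ {T : X} (p : T ⟶ A) (q : T ⟶ j₁.obj (js.obj B)),
      p ≫ f = q ≫ adj.counit.app B →
      ∃! mm : T ⟶ j₁.obj (js.obj A),
        mm ≫ adj.counit.app A = p ∧ mm ≫ j₁.map (js.map f) = q := by
    intro T p q hcomm
    let Yo : Over (j₁.obj (js.obj B)) := Over.mk q
    let O₀ : Over (js.obj B) := F.objPreimage Yo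
    let ι : F.obj O₀ ≅ Yo := F.objObjPreimageIso Yo
    let ih : j₁.obj O₀.left ⟶ T := ι.hom.left
    let iv : T ⟶ j₁.obj O₀.left := ι.inv.left
    have hι : ih ≫ q = j₁.map O₀.hom := by
      exact Over.w ι.hom
    have hιinv : iv ≫ ih = 𝟙 T := by
      show ι.inv.left ≫ ι.hom.left = 𝟙 T
      rw [← Over.comp_left, ι.inv_hom_id]
      rfl
    set pt := (adj.homEquiv O₀.left A) (ih ≫ p) with hptdef
    have hpt1 : j₁.map pt ≫ adj.counit.app A = ih ≫ p := by
      have := (adj.homEquiv O₀.left A).symm_apply_apply (ih ≫ p)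
      rwa [adj.homEquiv_counit] at this
    have hpt2 : pt ≫ js.map f = O₀.hom := by
      apply (adj.homEquiv O₀.left B).symm.injective
      rw [adj.homEquiv_counit, adj.homEquiv_counit, j₁.map_comp, Category.assoc,
        ← comm, ← Category.assoc, hpt1, Category.assoc, hcomm, ← Category.assoc, hι]
    refine ⟨iv ≫ j₁.map pt, ⟨?_, ?_⟩, ?_⟩
    · rw [Category.assoc, hpt1, ← Category.assoc, hιinv, Category.id_comp]
    · rw [Category.assoc, ← j₁.map_comp, hpt2, ← hι, ← Category.assoc, hιinv,
        Category.id_comp]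
    · rintro m ⟨hm1, hm2⟩
      have wχ : (ih ≫ m) ≫ (F.obj (Over.mk (js.map f))).hom = (F.obj O₀).hom := by
        show (ih ≫ m) ≫ j₁.map (js.map f) = j₁.map O₀.hom
        rw [Category.assoc, hm2]
        exact hι
      let χ : F.obj O₀ ⟶ F.obj (Over.mk (js.map f)) := Over.homMk (ih ≫ m) wχ
      have hjχ : j₁.map (F.preimage χ).left = ih ≫ m := by
        have := congrArg CommaMorphism.left (F.map_preimage χ)
        exact this
      have hkf : (F.preimage χ).left = pt := by
        apply (adj.homEquiv O₀.left A).symm.injective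
        rw [adj.homEquiv_counit, adj.homEquiv_counit, hjχ, Category.assoc, hm1, ← hpt1]
      calc m = (iv ≫ ih) ≫ m := by rw [hιinv, Category.id_comp]
        _ = iv ≫ j₁.map (F.preimage χ).left := by rw [Category.assoc, hjχ]
        _ = iv ≫ j₁.map pt := by rw [hkf]
  refine IsPullback.of_isLimit' ⟨comm⟩ ?_
  exact PullbackCone.IsLimit.mk comm
    (fun s => (H s.fst s.snd s.condition).choose)
    (fun s => (H s.fst s.snd s.condition).choose_spec.1.1)
    (fun s => (H s.fst s.snd s.condition).choose_spec.1.2)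
    (fun s m h1 h2 => (H s.fst s.snd s.condition).choose_spec.2 m ⟨h1, h2⟩)

end FromSlices

section Terminal

variable (U : Type u₁) [Category.{v₁} U] 

/-- The canonical functor from a category with a terminal object to the slice over it. -/
@[simps]
noncomputable def toOverTerminal [HasTerminal U] : U ⥤ Over (⊤_ U) where
  obj V := Over.mk (terminal.from V)
  map f := Over.homMk f

/-- A category with a terminal object is equivalent to the slice over it. -/
noncomputable def equivOverTerminal [HasTerminal U] : U ≌ Over (⊤_ U) :=
  CategoryTheory.Equivalence.mk (toOverTerminal U) (Over.forget _)
    (NatIso.ofComponents (fun V => Iso.refl _) (by intro _ _ f; exact (Category.comp_id f).trans (Category.id_comp f).symm))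
    (NatIso.ofComponents
      (fun Y => Over.isoMk (Iso.refl _) (terminal.hom_ext _ _)) (by intro _ _ f; ext; exact (Category.comp_id _).trans (Category.id_comp _).symm))

end Terminal

/-- `Over.post` of the forgetful functor agrees with the iterated slice equivalence. -/
def iteratedSliceIso {T : Type u₁} [Category.{v₁} T] {B : T} (f : Over B) :
    Over.iteratedSliceForward f ≅ Over.post (Over.forget B) (X := f) :=
  NatIso.ofComponents (fun g => Over.isoMk (Iso.refl _) (by exact Category.id_comp _)) (by intro _ _ φ; ext; exact (Category.comp_id _).trans (Category.id_comp _).symm)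

instance post_forget_isEquivalence {T : Type u₁} [Category.{v₁} T] {B : T} (f : Over B) :
    (Over.post (Over.forget B) (X := f)).IsEquivalence :=
  haveI : f.iteratedSliceForward.IsEquivalence :=
    inferInstanceAs (Over.iteratedSliceEquiv f).functor.IsEquivalence
  @Functor.isEquivalence_of_iso _ _ _ _ _ _ (iteratedSliceIso f) this

end LCAux

open LCAux

/-- For a left adjoint `j₁ : U ⥤ X` with `U` having pullbacks, the following are equivalent:
(1) `j₁` is conservative, preserves pullbacks, and the counit is Cartesian;
(2) `j₁` is conservative and left Cartesian;
(3) every induced slice functor `U_{/A} → X_{/j₁ A}` is an equivalence.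
Moreover, when `U` has a terminal object these conditions hold iff `j₁` is equivalent to a
slice projection. -/
theorem isLocallyCartesian_conservative_tfae {U : Type u₁} [Category.{v₁} U]
    {X : Type u₂} [Category.{v₂} X] [HasPullbacks U]
    (j₁ : U ⥤ X) (js : X ⥤ U) (adj : j₁ ⊣ js) :
    ((j₁.ReflectsIsomorphisms ∧ Nonempty (PreservesLimitsOfShape WalkingCospan j₁) ∧
        (∀ {A B : X} (f : A ⟶ B),
          IsPullback (adj.counit.app A) (j₁.map (js.map f)) f (adj.counit.app B))) ↔
      (j₁.ReflectsIsomorphisms ∧ IsLocallyCartesianAdj adj)) ∧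
    ((j₁.ReflectsIsomorphisms ∧ IsLocallyCartesianAdj adj) ↔
      (∀ A : U, (Over.post j₁ (X := A)).IsEquivalence)) ∧
    (HasTerminal U →
      ((∀ A : U, (Over.post j₁ (X := A)).IsEquivalence) ↔
        ∃ (B : X) (e : U ≌ Over B), Nonempty (e.functor ⋙ Over.forget B ≅ j₁))) := by
  -- (1) → (2)
  have h12 : (j₁.ReflectsIsomorphisms ∧ Nonempty (PreservesLimitsOfShape WalkingCospan j₁) ∧
      (∀ {A B : X} (f : A ⟶ B),
        IsPullback (adj.counit.app A) (j₁.map (js.map f)) f (adj.counit.app B))) →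
      (j₁.ReflectsIsomorphisms ∧ IsLocallyCartesianAdj adj) := by
    rintro ⟨hR, ⟨hP⟩, hc⟩
    refine ⟨hR, ?_⟩
    intro A B f Z g
    haveI := hP
    have h1 : IsPullback (j₁.map (pullback.fst (js.map f) g))
        (j₁.map (pullback.snd (js.map f) g)) (j₁.map (js.map f)) (j₁.map g) :=
      (IsPullback.of_hasPullback (js.map f) g).map j₁
    exact h1.paste_horiz (hc f)
  -- (2) → (3)
  have h23 : (j₁.ReflectsIsomorphisms ∧ IsLocallyCartesianAdj adj) →
      (∀ A : U, (Over.post j₁ (X := A)).IsEquivalence) := by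
    rintro ⟨hR, hlc⟩ A
    exact post_isEquivalence adj hlc hR A
  -- (3) → (1)
  have h31 : (∀ A : U, (Over.post j₁ (X := A)).IsEquivalence) →
      (j₁.ReflectsIsomorphisms ∧ Nonempty (PreservesLimitsOfShape WalkingCospan j₁) ∧
      (∀ {A B : X} (f : A ⟶ B),
        IsPullback (adj.counit.app A) (j₁.map (js.map f)) f (adj.counit.app B))) := by
    intro hE
    refine ⟨reflectsIso_of_slices hE, ⟨?_⟩, fun {A B} f => counit_cartesian_of_slices adj hE f⟩
    haveI : ∀ {A₀ B₀ C₀ : U} (f₀ : A₀ ⟶ C₀) (g₀ : B₀ ⟶ C₀),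
        PreservesLimit (cospan f₀ g₀) j₁ := by
      intro A₀ B₀ C₀ f₀ g₀
      exact preservesLimit_of_preserves_limit_cone (pullbackIsPullback f₀ g₀)
        ((isLimitMapConePullbackConeEquiv j₁ pullback.condition).symm
          (map_isPullback_of_slices hE (IsPullback.of_hasPullback f₀ g₀)).isLimit)
    exact ⟨fun {K} => preservesLimit_of_iso_diagram j₁ (diagramIsoCospan K).symm⟩
  refine ⟨⟨h12, fun h => h31 (h23 h)⟩, ⟨h23, fun h => h12 (h31 h)⟩, fun hT => ⟨?_, ?_⟩⟩
  · -- (3) → slice projection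
    intro hE
    haveI := hE (⊤_ U)
    refine ⟨j₁.obj (⊤_ U),
      (equivOverTerminal U).trans (Over.post j₁ (X := ⊤_ U)).asEquivalence,
      ⟨NatIso.ofComponents (fun V => Iso.refl _) ?_⟩⟩
    intro V W f
    simp only [Functor.comp_map, Iso.refl_hom, Category.comp_id, Category.id_comp]
    exact (Category.comp_id _).trans (Category.id_comp _).symm
  · -- slice projection → (3)
    rintro ⟨B, e, ⟨iso⟩⟩ A
    haveI h0 : (Over.post (X := A) (e.functor ⋙ Over.forget B)).IsEquivalence := by
      rw [Over.post_comp]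
      haveI i1 : (Over.post (X := A) e.functor).IsEquivalence := inferInstance
      haveI i2 : (Over.post (Over.forget B) (X := e.functor.obj A)).IsEquivalence :=
        inferInstance
      infer_instance
    haveI h1 : (Over.map (iso.hom.app A)).IsEquivalence := by
      have : (Over.mapIso (asIso (iso.hom.app A))).functor = Over.map (iso.hom.app A) :=
        Over.mapIso_functor _
      rw [← this]
      infer_instance
    exact Functor.isEquivalence_of_iso (Over.postCongr iso)
end
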